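/- Let L ≤ U and define s̲ = (-ReLU(-U) + ReLU(-L))/(U - L), t̲ = -s̲·L - ReLU(-L), s̄ = (ReLU(U) - ReLU(L))/(U - L), t̄ = -s̄·L + ReLU(L) (assuming L < U). Then for all J ∈ [L, U] and all δ ∈ [0, 1]: s̲·J + t̲ ≤ J·δ ≤ s̄·J + t̄. -/

import Mathlib

def relu (x : ℝ) : ℝ := max x 0

theorem clarke_relaxation_general (L U : ℝ) (hLU : L < U)
    (sl tl su tu : ℝ)
    (hsl : sl = (-relu (-U) + relu (-L)) / (U - L))
    (htl : tl = -sl * L - relu (-L))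
    (hsu : su = (relu U - relu L) / (U - L))
    (htu : tu = -su * L + relu L) :
    ∀ J δ : ℝ, L ≤ J → J ≤ U → 0 ≤ δ → δ ≤ 1 →
      sl * J + tl ≤ J * δ ∧ J * δ ≤ su * J + tu := by
  intro J δ hLJ hJU hδ0 hδ1
  have hUL : (0:ℝ) < U - L := by linarith
  have hne : U - L ≠ 0 := ne_of_gt hUL
  subst hsl htl hsu htu
  unfold relu
  rcases le_or_gt 0 L with hL | hL
  · rw [max_eq_right (by linarith : (-U:ℝ) ≤ 0), max_eq_right (by linarith : (-L:ℝ) ≤ 0),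
      max_eq_left (by linarith : (0:ℝ) ≤ U), max_eq_left hL]
    constructor
    · have h0 : (0:ℝ) ≤ J * δ := mul_nonneg (by linarith) hδ0
      have e : (-0 + 0) / (U - L) * J + (-((-0 + 0) / (U - L)) * L - 0) = 0 := by
        field_simp; ring
      linarith [e]
    · have h1 : J * δ ≤ J := by nlinarith
      have e : (U - L) / (U - L) * J + (-((U - L) / (U - L)) * L + L) = J := by
        field_simp; ring
      linarith [e]
  · rcases le_or_gt U 0 with hU | hU
    · rw [max_eq_left (by linarith : (0:ℝ) ≤ -U), max_eq_left (by linarith : (0:ℝ) ≤ -L),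
        max_eq_right hU, max_eq_right hL.le]
      constructor
      · have h1 : J ≤ J * δ := by nlinarith
        have e : (- -U + -L) / (U - L) * J + (-((- -U + -L) / (U - L)) * L - -L) = J := by
          field_simp; ring
        linarith [e]
      · have h0 : J * δ ≤ 0 := mul_nonpos_of_nonpos_of_nonneg (by linarith) hδ0
        have e : (0 - 0) / (U - L) * J + (-((0 - 0) / (U - L)) * L + 0) = 0 := by
          field_simp; ring
        linarith [e]
    · rw [max_eq_right (by linarith : (-U:ℝ) ≤ 0), max_eq_left (by linarith : (0:ℝ) ≤ -L),
          max_eq_left hU.le, max_eq_right hL.le]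
      constructor
      · have e : (-0 + -L) / (U - L) * J + (-((-0 + -L) / (U - L)) * L - -L)
            = (-L * (J - L)) / (U - L) + L := by ring
        rw [e, ← le_sub_iff_add_le, div_le_iff₀ hUL]
        rcases le_or_gt 0 J with hJ | hJ
        · nlinarith [mul_nonneg (sub_nonneg.2 hJU) (by linarith : (0:ℝ) ≤ -L),
            mul_nonneg (mul_nonneg hJ hδ0) hUL.le]
        · have h1 : 0 ≤ J * (δ - 1) := mul_nonneg_of_nonpos_of_nonpos hJ.le (by linarith : δ - 1 ≤ 0)
          nlinarith [mul_nonneg h1 hUL.le, mul_nonneg hU.le (sub_nonneg.2 hLJ)]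
      · have e : (U - 0) / (U - L) * J + (-((U - 0) / (U - L)) * L + 0)
            = (U * (J - L)) / (U - L) := by ring
        rw [e, le_div_iff₀ hUL]
        rcases le_or_gt 0 J with hJ | hJ
        · nlinarith [mul_nonneg (mul_nonneg hJ (by linarith : (0:ℝ) ≤ 1 - δ)) hUL.le,
            mul_nonneg (sub_nonneg.2 hJU) (by linarith : (0:ℝ) ≤ -L)]
        · have h1 : J * δ ≤ 0 := mul_nonpos_of_nonpos_of_nonneg hJ.le hδ0
          nlinarith [mul_nonneg hU.le (sub_nonneg.2 hLJ), mul_nonneg (neg_nonneg.2 h1) hUL.le]
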